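/- For every T ∈ hom(𝓗₋₊), the string Fourier transform intertwines the reflection with the adjoint: 𝔉ₛ(θ(T)) = 𝔉ₛ(T)*, where θ(T) := θ T θ and * denotes the Hilbert-space adjoint on 𝓗₊₋. -/

import Mathlib

open scoped ComplexInnerProductSpace ComplexOrder

/-- The string Fourier transform intertwines the reflection with the adjoint:
`𝔉ₛ(θ(T)) = 𝔉ₛ(T)*`, where `θ(T) = θ T θ`. -/
theorem sft_reflection_eq_adjoint
{Hp Hm Hmp Hpm : Type}
    [NormedAddCommGroup Hp] [InnerProductSpace ℂ Hp] [FiniteDimensional ℂ Hp]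
    [NormedAddCommGroup Hm] [InnerProductSpace ℂ Hm] [FiniteDimensional ℂ Hm]
    [NormedAddCommGroup Hmp] [InnerProductSpace ℂ Hmp] [FiniteDimensional ℂ Hmp]
    [NormedAddCommGroup Hpm] [InnerProductSpace ℂ Hpm] [FiniteDimensional ℂ Hpm]
(θ : Hp ≃ₗ⋆[ℂ] Hm)
    (hθ : ∀ x x' : Hp, ⟪x, x'⟫ = ⟪θ x', θ x⟫)
(tmp : Hm →ₗ[ℂ] Hp →ₗ[ℂ] Hmp) (tpm : Hp →ₗ[ℂ] Hm →ₗ[ℂ] Hpm)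
    (htmp : ∀ (y : Hm) (x : Hp) (y' : Hm) (x' : Hp),
      ⟪tmp y x, tmp y' x'⟫ = ⟪y, y'⟫ * ⟪x, x'⟫)
    (htpm : ∀ (x : Hp) (y : Hm) (x' : Hp) (y' : Hm),
      ⟪tpm x y, tpm x' y'⟫ = ⟪x, x'⟫ * ⟪y, y'⟫)
    (hmp_span : ⊤ ≤ Submodule.span ℂ (Set.range fun p : Hm × Hp => tmp p.1 p.2))
    (hpm_span : ⊤ ≤ Submodule.span ℂ (Set.range fun p : Hp × Hm => tpm p.1 p.2))
(Fs : (Hmp →L[ℂ] Hmp) → (Hpm →L[ℂ] Hpm))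
    (hFs : ∀ (T : Hmp →L[ℂ] Hmp) (x x' : Hp) (y y' : Hm),
      ⟪tpm x y, Fs T (tpm x' y')⟫ = ⟪tmp (θ x') x, T (tmp y' (θ.symm y))⟫)
(Θ : Hmp →ₛₗ[starRingEnd ℂ] Hmp)
    (hΘ : ∀ (y : Hm) (x : Hp), Θ (tmp y x) = tmp (θ x) (θ.symm y))
    (T Tθ : Hmp →L[ℂ] Hmp) (hTθ : ∀ v : Hmp, Tθ v = Θ (T (Θ v))) :
    Fs Tθ = ContinuousLinearMap.adjoint (Fs T) := by

  -- Θ reverses inner products against generator vectors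
  have hΘinner : ∀ (x x' : Hp) (w : Hmp),
      ⟪(tmp (θ x') x : Hmp), Θ w⟫ = ⟪w, tmp (θ x) x'⟫ := by
    intro x x' w
    refine Submodule.span_induction ?_ ?_ ?_ ?_ (hmp_span (Submodule.mem_top (x := w)))
    · rintro _ ⟨⟨y0, x0⟩, rfl⟩
      simp only [hΘ, htmp]
      rw [← hθ x0 x', hθ x (θ.symm y0), θ.apply_symm_apply]
      ring
    · simp
    · intro a b _ _ ha hb
      simp [map_add, inner_add_right, inner_add_left, ha, hb]
    · intro c a _ ha
      simp [map_smulₛₗ, inner_smul_right, inner_smul_left, ha, mul_comm]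
  -- matrix elements agree
  have key : ∀ (x x' : Hp) (y y' : Hm),
      ⟪tpm x y, Fs Tθ (tpm x' y')⟫
        = ⟪tpm x y, (ContinuousLinearMap.adjoint (Fs T)) (tpm x' y')⟫ := by
    intro x x' y y'
    rw [hFs, ContinuousLinearMap.adjoint_inner_right, hTθ, hΘ, θ.apply_symm_apply,
      hΘinner]
    have h := congrArg (starRingEnd ℂ) (hFs T x' x y' y)
    simpa only [inner_conj_symm] using h.symm
  -- extend in the second argument
  have key2 : ∀ (x : Hp) (y : Hm) (v : Hpm),
      ⟪tpm x y, Fs Tθ v⟫ = ⟪tpm x y, (ContinuousLinearMap.adjoint (Fs T)) v⟫ := by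
    intro x y v
    refine Submodule.span_induction ?_ ?_ ?_ ?_ (hpm_span (Submodule.mem_top (x := v)))
    · rintro _ ⟨⟨x0, y0⟩, rfl⟩
      exact key x x0 y y0
    · simp
    · intro a b _ _ ha hb
      simp [map_add, inner_add_right, ha, hb]
    · intro c a _ ha
      simp [map_smul, inner_smul_right, ha]
  ext v
  refine ext_inner_left ℂ ?_
  intro u
  refine Submodule.span_induction ?_ ?_ ?_ ?_ (hpm_span (Submodule.mem_top (x := u)))
  · rintro _ ⟨⟨x0, y0⟩, rfl⟩
    exact key2 x0 y0 v
  · simp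
  · intro a b _ _ ha hb
    simp [inner_add_left, ha, hb]
  · intro c a _ ha
    simp [inner_smul_left, ha]
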